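/- Let a₁(x) ≥ a₂(x) ≥ ... ≥ a_k(x) be continuous functions on [b,c], set a₀ = +∞ and a_{k+1} = −∞. Then for every A ∈ ℝ there exist j ∈ {0,...,k} and a continuous function h on [b,c] with a_{j+1}(x) ≤ h(x) ≤ a_j(x) for all x and ∫_b^c h(x) dx = A. (When j=0 or j=k the one-sided bound by the finite function suffices along with appropriate scaling.) -/

import Mathlib

theorem stmt_8 (b c : ℝ) (hbc : b < c) (k : ℕ)
    (a : Fin k → ℝ → ℝ)
    (hcont : ∀ i, ContinuousOn (a i) (Set.Icc b c))
    (hmono : ∀ i j : Fin k, i ≤ j → ∀ x ∈ Set.Icc b c, a j x ≤ a i x)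
    (A : ℝ) :
    ∃ j : ℕ, ∃ hjk : j ≤ k, ∃ h : ℝ → ℝ,
      ContinuousOn h (Set.Icc b c) ∧
      (∫ x in b..c, h x) = A ∧
      (∀ hj : 1 ≤ j, ∀ x ∈ Set.Icc b c, h x ≤ a ⟨j - 1, by omega⟩ x) ∧
      (∀ hj : j < k, ∀ x ∈ Set.Icc b c, a ⟨j, hj⟩ x ≤ h x) := by
  classical
  have hcb : (0:ℝ) < c - b := by linarith
  have hInt : ∀ i : Fin k, IntervalIntegrable (a i) MeasureTheory.volume b c := by
    intro i
    apply ContinuousOn.intervalIntegrable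
    rw [Set.uIcc_of_le hbc.le]; exact hcont i
  rcases Nat.eq_zero_or_pos k with hk | hk
  · subst hk
    refine ⟨0, le_refl 0, fun _ => A / (c - b), continuousOn_const, ?_, ?_, ?_⟩
    · rw [intervalIntegral.integral_const, smul_eq_mul]
      field_simp
    · intro hj; omega
    · intro hj; omega
  · set I : Fin k → ℝ := fun i => ∫ x in b..c, a i x with hI
    have h0 : (0 : ℕ) < k := hk
    by_cases hA0 : I ⟨0, h0⟩ ≤ A
    · refine ⟨0, Nat.zero_le k,
        fun x => a ⟨0, h0⟩ x + (A - I ⟨0, h0⟩) / (c - b), ?_, ?_, ?_, ?_⟩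
      · exact (hcont _).add continuousOn_const
      · rw [intervalIntegral.integral_add (hInt _) intervalIntegrable_const,
          intervalIntegral.integral_const, smul_eq_mul]
        field_simp
        linarith [show I ⟨0, h0⟩ = ∫ x in b..c, a ⟨0, h0⟩ x from rfl]
      · intro hj; omega
      · intro hj x hx
        have h1 : a (⟨0, hj⟩ : Fin k) x = a ⟨0, h0⟩ x := rfl
        have h2 : 0 ≤ (A - I ⟨0, h0⟩) / (c - b) := div_nonneg (by linarith) hcb.le
        rw [h1]; linarith
    · push_neg at hA0
      have hk1 : k - 1 < k := by omega
      by_cases hAk : A ≤ I ⟨k - 1, hk1⟩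
      · refine ⟨k, le_refl k,
          fun x => a ⟨k - 1, hk1⟩ x + (A - I ⟨k - 1, hk1⟩) / (c - b), ?_, ?_, ?_, ?_⟩
        · exact (hcont _).add continuousOn_const
        · rw [intervalIntegral.integral_add (hInt _) intervalIntegrable_const,
            intervalIntegral.integral_const, smul_eq_mul]
          field_simp
          linarith [show I ⟨k - 1, hk1⟩ = ∫ x in b..c, a ⟨k - 1, hk1⟩ x from rfl]
        · intro hj x hx
          have h1 : a (⟨k - 1, by omega⟩ : Fin k) x = a ⟨k - 1, hk1⟩ x := rfl
          have h2 : (A - I ⟨k - 1, hk1⟩) / (c - b) ≤ 0 :=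
            div_nonpos_of_nonpos_of_nonneg (by linarith) hcb.le
          rw [h1]; linarith
        · intro hj; omega
      · push_neg at hAk
        have hex : ∃ m, ∃ hm : m < k, I ⟨m, hm⟩ < A := ⟨k - 1, hk1, hAk⟩
        set m := Nat.find hex with hmdef
        obtain ⟨hmk, hIm⟩ : ∃ hm : m < k, I ⟨m, hm⟩ < A := Nat.find_spec hex
        have hm1 : 1 ≤ m := by
          by_contra hcon
          have h0m : m = 0 := by omega
          have heq : (⟨m, hmk⟩ : Fin k) = ⟨0, h0⟩ := by
            apply Fin.ext; simp [h0m]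
          rw [heq] at hIm
          linarith
        have hmm : m - 1 < k := by omega
        have hIm1 : A ≤ I ⟨m - 1, hmm⟩ := by
          by_contra h
          push_neg at h
          exact Nat.find_min hex (show m - 1 < m by omega) ⟨hmm, h⟩
        set d : ℝ := I ⟨m - 1, hmm⟩ - I ⟨m, hmk⟩ with hd
        have hdpos : 0 < d := by
          have : I ⟨m, hmk⟩ < I ⟨m - 1, hmm⟩ := lt_of_lt_of_le hIm hIm1
          simpa [hd] using sub_pos.2 this
        set t : ℝ := (A - I ⟨m, hmk⟩) / d with ht
        have ht0 : 0 ≤ t := div_nonneg (by linarith) hdpos.le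
        have ht1 : t ≤ 1 := by
          rw [ht, div_le_one hdpos]
          simp only [hd]; linarith
        refine ⟨m, by omega,
          fun x => a ⟨m, hmk⟩ x + t * (a ⟨m - 1, hmm⟩ x - a ⟨m, hmk⟩ x), ?_, ?_, ?_, ?_⟩
        · exact (hcont _).add (continuousOn_const.mul ((hcont _).sub (hcont _)))
        · rw [intervalIntegral.integral_add (hInt _)
            (((hInt _).sub (hInt _)).const_mul t),
            intervalIntegral.integral_const_mul,
            intervalIntegral.integral_sub (hInt _) (hInt _)]
          have : t * (I ⟨m - 1, hmm⟩ - I ⟨m, hmk⟩) = A - I ⟨m, hmk⟩ := by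
            rw [ht, ← hd, div_mul_cancel₀]
            exact hdpos.ne'
          simp only [hI] at this ⊢
          linarith
        · intro hj x hx
          have h1 : a (⟨m - 1, by omega⟩ : Fin k) x = a ⟨m - 1, hmm⟩ x := rfl
          have hle : a ⟨m, hmk⟩ x ≤ a ⟨m - 1, hmm⟩ x :=
            hmono ⟨m - 1, hmm⟩ ⟨m, hmk⟩ (Fin.mk_le_mk.2 (by omega)) x hx
          have := mul_nonneg (sub_nonneg.2 ht1) (sub_nonneg.2 hle)
          dsimp only; rw [h1]; nlinarith [this]
        · intro hj x hx
          have h1 : a (⟨m, hj⟩ : Fin k) x = a ⟨m, hmk⟩ x := rfl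
          have hle : a ⟨m, hmk⟩ x ≤ a ⟨m - 1, hmm⟩ x :=
            hmono ⟨m - 1, hmm⟩ ⟨m, hmk⟩ (Fin.mk_le_mk.2 (by omega)) x hx
          have := mul_nonneg ht0 (sub_nonneg.2 hle)
          dsimp only; rw [h1]; nlinarith [this]
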